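/- Let R be a ring and σ : P₋₁ → P₀ an R-linear map between projective R-modules. Then there exist free R-modules F₋₁, F₀ and an R-linear map φ : F₋₁ → F₀ such that D_σ = D_φ, i.e. for every R-module M, every R-linear map P₋₁ → M factors through σ if and only if every R-linear map F₋₁ → M factors through φ. -/

import Mathlib

universe u

/-- `M ∈ D_σ`: every `R`-linear map `A → M` factors through `σ : A → B`. -/
def MemD {R : Type u} [Ring R] {A B : Type u} [AddCommGroup A] [Module R A]
    [AddCommGroup B] [Module R B] (σ : A →ₗ[R] B)
    (M : Type u) [AddCommGroup M] [Module R M] : Prop :=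
  ∀ f : A →ₗ[R] M, ∃ g : B →ₗ[R] M, g.comp σ = f

/-- Lemma: for any map `σ` between projective modules there is a map `φ` between free
modules with `D_σ = D_φ`. -/
theorem stmt_1 {R : Type u} [Ring R]
    (P₁ P₀ : Type u) [AddCommGroup P₁] [Module R P₁] [AddCommGroup P₀] [Module R P₀]
    [Module.Projective R P₁] [Module.Projective R P₀] (σ : P₁ →ₗ[R] P₀) :
    ∃ (F₁ F₀ : Type u) (_ : AddCommGroup F₁) (_ : Module R F₁)
      (_ : AddCommGroup F₀) (_ : Module R F₀),
      Module.Free R F₁ ∧ Module.Free R F₀ ∧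
      ∃ φ : F₁ →ₗ[R] F₀,
        ∀ (M : Type u) [AddCommGroup M] [Module R M], MemD σ M ↔ MemD φ M := by
  obtain ⟨s₁, hs₁⟩ := (Module.projective_def' (R := R) (P := P₁)).mp ‹_›
  obtain ⟨s₀, hs₀⟩ := (Module.projective_def' (R := R) (P := P₀)).mp ‹_›
  set i₁ : (P₁ →₀ R) →ₗ[R] P₁ := Finsupp.linearCombination R id
  set i₀ : (P₀ →₀ R) →ₗ[R] P₀ := Finsupp.linearCombination R id
  refine ⟨P₁ →₀ R, (P₀ →₀ R) × (P₁ →₀ R), inferInstance, inferInstance, inferInstance,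
    inferInstance, inferInstance, inferInstance,
    LinearMap.prod (s₀ ∘ₗ σ ∘ₗ i₁) (LinearMap.id - s₁ ∘ₗ i₁), ?_⟩
  intro M _ _
  have hi₁ : ∀ p : P₁, i₁ (s₁ p) = p := fun p => congrArg (· p) hs₁
  have hi₀ : ∀ p : P₀, i₀ (s₀ p) = p := fun p => congrArg (· p) hs₀
  constructor
  · intro h f
    obtain ⟨g, hg⟩ := h (f ∘ₗ s₁)
    refine ⟨(g ∘ₗ i₀) ∘ₗ LinearMap.fst R _ _ + f ∘ₗ LinearMap.snd R _ _, ?_⟩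
    ext x
    have := congrArg (· (i₁ (Finsupp.single x 1))) hg
    simp only [LinearMap.comp_apply] at this ⊢
    simp [LinearMap.add_apply, LinearMap.comp_apply, LinearMap.sub_apply, hi₀, this,
      map_sub]
  · intro h f
    obtain ⟨g, hg⟩ := h (f ∘ₗ i₁)
    refine ⟨(g ∘ₗ LinearMap.inl R _ _) ∘ₗ s₀, ?_⟩
    ext p
    have := congrArg (· (s₁ p)) hg
    simp only [LinearMap.comp_apply, LinearMap.prod_apply, Function.prod, LinearMap.sub_apply,
      LinearMap.id_apply, hi₁] at this ⊢
    rw [sub_self] at this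
    simpa [hi₁] using this
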